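/- Let T be a finite binary tree in which every internal node has exactly two children, let each leaf ℓ carry a real true score score(ℓ), and let every node v carry a real estimate s(v) such that: (i) for every node v and every leaf ℓ in the subtree rooted at v, s(v) ≥ score(ℓ); (ii) for every internal node v with children u and w, s(u) ≤ s(v) and s(w) ≤ s(v); and (iii) for every leaf ℓ, s(ℓ) = score(ℓ). Consider the best-first (GREEDY) extraction process: maintain a finite multiset of nodes, initialized to the singleton {root}; at each step remove a node of maximum estimate from the multiset; if the removed node is a leaf, report it, otherwise insert its two children into the multiset; stop when the multiset is empty. Then the reported leaves appear in non-increasing order of true score; in particular, for every k, the first k reported leaves form a rank-safe top-k answer: every leaf among the first k reported has true score at least the true score of every leaf not among the first k reported. -/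

import Mathlib

/-- A finite binary tree in which every internal node has exactly two children;
leaves carry labels from `α`. -/
inductive BinTree (α : Type*) : Type _
  | leaf : α → BinTree α
  | node : BinTree α → BinTree α → BinTree α

namespace BinTree

/-- All nodes (subtrees) of a binary tree. -/
def subtrees {α : Type*} : BinTree α → List (BinTree α)
  | leaf a => [leaf a]
  | node l r => node l r :: (l.subtrees ++ r.subtrees)

/-- The labels of the leaves of a binary tree, from left to right. -/
def leafLabels {α : Type*} : BinTree α → List α
  | leaf a => [a]
  | node l r => l.leafLabels ++ r.leafLabels

end BinTree

/-- One step of the best-first (GREEDY) extraction process: remove a node of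
maximum estimate from the multiset; if it is a leaf, report it, otherwise
insert its two children into the multiset. -/
inductive GreedyStep {α : Type*} (s : BinTree α → ℝ) :
    Multiset (BinTree α) × List α → Multiset (BinTree α) × List α → Prop
  | extract_leaf (M : Multiset (BinTree α)) (out : List α) (a : α)
      (hmax : ∀ t ∈ (BinTree.leaf a ::ₘ M), s t ≤ s (BinTree.leaf a)) :
      GreedyStep s (BinTree.leaf a ::ₘ M, out) (M, out ++ [a])
  | extract_node (M : Multiset (BinTree α)) (out : List α) (l r : BinTree α)
      (hmax : ∀ t ∈ (BinTree.node l r ::ₘ M), s t ≤ s (BinTree.node l r)) :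
      GreedyStep s (BinTree.node l r ::ₘ M, out) (l ::ₘ r ::ₘ M, out)

lemma BinTree.self_mem_subtrees {α : Type*} (t : BinTree α) : t ∈ t.subtrees := by
  cases t <;> simp [BinTree.subtrees]

lemma BinTree.children_mem_subtrees {α : Type*} (T l r : BinTree α)
    (h : BinTree.node l r ∈ T.subtrees) :
    l ∈ T.subtrees ∧ r ∈ T.subtrees := by
  induction T with
  | leaf a => simp [BinTree.subtrees] at h
  | node L R ihL ihR =>
    simp only [BinTree.subtrees, List.mem_cons, List.mem_append] at h ⊢
    rcases h with h | h | h
    · injection h with h1 h2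
      subst h1; subst h2
      exact ⟨Or.inr (Or.inl (BinTree.self_mem_subtrees _)),
             Or.inr (Or.inr (BinTree.self_mem_subtrees _))⟩
    · rcases ihL h with ⟨hl, hr⟩
      exact ⟨Or.inr (Or.inl hl), Or.inr (Or.inl hr)⟩
    · rcases ihR h with ⟨hl, hr⟩
      exact ⟨Or.inr (Or.inr hl), Or.inr (Or.inr hr)⟩

/-- The GREEDY extraction process reports the leaves in non-increasing order of
true score; in particular for every `k` the first `k` reported leaves are a
rank-safe top-`k` answer. -/
theorem greedy_rank_safe {α : Type*} (root : BinTree α) (score : α → ℝ)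
    (s : BinTree α → ℝ)
    (h1 : ∀ v ∈ root.subtrees, ∀ a ∈ v.leafLabels, score a ≤ s v)
    (h2 : ∀ l r : BinTree α, BinTree.node l r ∈ root.subtrees →
      s l ≤ s (BinTree.node l r) ∧ s r ≤ s (BinTree.node l r))
    (h3 : ∀ a : α, BinTree.leaf a ∈ root.subtrees → s (BinTree.leaf a) = score a)
    (out : List α)
    (hrun : Relation.ReflTransGen (GreedyStep s)
      (({root} : Multiset (BinTree α)), ([] : List α))
      ((0 : Multiset (BinTree α)), out)) :
    out.Pairwise (fun a b => score b ≤ score a) ∧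
      ∀ k : ℕ, ∀ a ∈ out.take k, ∀ b ∈ out.drop k, score b ≤ score a := by
  set Inv : Multiset (BinTree α) × List α → Prop := fun p =>
    (∀ t ∈ p.1, t ∈ root.subtrees) ∧
    p.2.Pairwise (fun a b => score b ≤ score a) ∧
    (∀ a ∈ p.2, ∀ t ∈ p.1, s t ≤ score a) with hInv
  have key : Inv ((0 : Multiset (BinTree α)), out) := by
    have step : ∀ p q, GreedyStep s p q → Inv p → Inv q := by
      intro p q hstep hp
      rcases hp with ⟨hmem, hsort, hbound⟩
      cases hstep with
      | extract_leaf M o a hmax =>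
        have hleaf : BinTree.leaf a ∈ root.subtrees :=
          hmem _ (Multiset.mem_cons_self _ _)
        have hsa : s (BinTree.leaf a) = score a := h3 a hleaf
        refine ⟨fun t ht => hmem t (Multiset.mem_cons_of_mem ht), ?_, ?_⟩
        · refine List.pairwise_append.mpr ⟨hsort, List.pairwise_singleton _ _, ?_⟩
          intro x hx b hb
          simp at hb; subst hb
          have := hbound x hx _ (Multiset.mem_cons_self _ _)
          linarith [this]
        · intro b hb t ht
          rcases List.mem_append.mp hb with hb | hb
          · exact hbound b hb t (Multiset.mem_cons_of_mem ht)
          · simp at hb; subst hb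
            have := hmax t (Multiset.mem_cons_of_mem ht)
            linarith
      | extract_node M o l r hmax =>
        have hnode : BinTree.node l r ∈ root.subtrees :=
          hmem _ (Multiset.mem_cons_self _ _)
        obtain ⟨hl, hr⟩ := BinTree.children_mem_subtrees root l r hnode
        obtain ⟨hsl, hsr⟩ := h2 l r hnode
        refine ⟨?_, hsort, ?_⟩
        · intro t ht
          rcases Multiset.mem_cons.mp ht with rfl | ht
          · exact hl
          rcases Multiset.mem_cons.mp ht with rfl | ht
          · exact hr
          · exact hmem t (Multiset.mem_cons_of_mem ht)
        · intro a ha t ht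
          have hnb := hbound a ha _ (Multiset.mem_cons_self _ _)
          rcases Multiset.mem_cons.mp ht with rfl | ht
          · linarith
          rcases Multiset.mem_cons.mp ht with rfl | ht
          · linarith
          · exact hbound a ha t (Multiset.mem_cons_of_mem ht)
    have init : Inv (({root} : Multiset (BinTree α)), ([] : List α)) := by
      refine ⟨?_, List.Pairwise.nil, by simp⟩
      intro t ht
      simp at ht; subst ht
      exact BinTree.self_mem_subtrees _
    have gen : ∀ q, Relation.ReflTransGen (GreedyStep s)
        (({root} : Multiset (BinTree α)), ([] : List α)) q → Inv q := by
      intro q hq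
      induction hq with
      | refl => exact init
      | tail _ hstep ih => exact step _ _ hstep ih
    exact gen _ hrun
  obtain ⟨_, hsort, _⟩ := key
  refine ⟨hsort, fun k a ha b hb => ?_⟩
  have hout : out = out.take k ++ out.drop k := (List.take_append_drop k out).symm
  rw [hout] at hsort
  exact ((List.pairwise_append.mp hsort).2.2) a ha b hb
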